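/- Let (H, ω) be a symplectic vector space and (λ, μ) an algebraic Fredholm pair of isotropic subspaces with index(λ, μ) ≥ 0. Then index(λ, μ) = 0 and (λ + μ)^ω = λ ∩ μ. -/

import Mathlib

/-- For an algebraic Fredholm pair `(λ, μ)` of isotropic subspaces of a complex
symplectic vector space with `index(λ,μ) ≥ 0`, the index vanishes and
`(λ + μ)^ω = λ ∩ μ`. -/
theorem isotropic_fredholm_pair_index_zero
    {H : Type*} [AddCommGroup H] [Module ℂ H]
    (ω : H → H → ℂ)
    (hadd : ∀ x y z : H, ω (x + y) z = ω x z + ω y z)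
    (hsmul : ∀ (c : ℂ) (x y : H), ω (c • x) y = c * ω x y)
    (hskew : ∀ x y : H, ω x y = -(starRingEnd ℂ) (ω y x))
    (hnondeg : ∀ x : H, (∀ y : H, ω x y = 0) → x = 0)
    (lam mu : Submodule ℂ H)
    (hlam_iso : ∀ x ∈ lam, ∀ y ∈ lam, ω x y = 0)
    (hmu_iso : ∀ x ∈ mu, ∀ y ∈ mu, ω x y = 0)
    [FiniteDimensional ℂ ↥(lam ⊓ mu)]
    [FiniteDimensional ℂ (H ⧸ (lam ⊔ mu))]
    (hindex : (Module.finrank ℂ (H ⧸ (lam ⊔ mu)) : ℤ) ≤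
      (Module.finrank ℂ ↥(lam ⊓ mu) : ℤ)) :
    Module.finrank ℂ ↥(lam ⊓ mu) = Module.finrank ℂ (H ⧸ (lam ⊔ mu)) ∧
    {y : H | ∀ x ∈ lam ⊔ mu, ω x y = 0} = ((lam ⊓ mu : Submodule ℂ H) : Set H) := by
  set A := lam ⊔ mu with hA
  -- auxiliary facts about ω in the second variable
  have hadd2 : ∀ x y z : H, ω x (y + z) = ω x y + ω x z := by
    intro x y z
    rw [hskew x (y + z), hadd, map_add, neg_add, ← hskew, ← hskew]
  have hsmul2 : ∀ (c : ℂ) (x y : H), ω x (c • y) = (starRingEnd ℂ) c * ω x y := by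
    intro c x y
    rw [hskew x (c • y), hsmul, map_mul, ← mul_neg, ← hskew]
  have hzero2 : ∀ x : H, ω x 0 = 0 := by
    intro x
    have h := hadd2 x 0 0
    rw [add_zero] at h
    exact (left_eq_add.mp h)
  -- the annihilator of A (in the second slot) as a ℂ-submodule
  set N : Submodule ℂ H :=
    { carrier := {y : H | ∀ x ∈ A, ω x y = 0}
      add_mem' := fun {a b} ha hb x hx => by rw [hadd2, ha x hx, hb x hx, add_zero]
      zero_mem' := fun x _ => hzero2 x
      smul_mem' := fun c y hy x hx => by rw [hsmul2, hy x hx, mul_zero] } with hNdef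
  have hNmem : ∀ y : H, y ∈ N ↔ ∀ x ∈ A, ω x y = 0 := fun y => Iff.rfl
  -- lam ⊓ mu ≤ N
  have hKN : lam ⊓ mu ≤ N := by
    intro y hy x hx
    rcases Submodule.mem_sup.mp hx with ⟨l, hl, m, hm, rfl⟩
    rw [hadd, hlam_iso l hl y hy.1, hmu_iso m hm y hy.2, add_zero]
  -- the ℝ-linear embedding of N into the ℂ-dual of H ⧸ A
  have hker : ∀ y : N, A ≤ LinearMap.ker
      ({ toFun := fun x => ω x (y : H)
         map_add' := fun a b => hadd a b (y : H)
         map_smul' := fun c a => hsmul c a (y : H) } : H →ₗ[ℂ] ℂ) := by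
    intro y x hx
    exact y.2 x hx
  set f : N →ₗ[ℝ] ((H ⧸ A) →ₗ[ℂ] ℂ) :=
    { toFun := fun y => A.liftQ _ (hker y)
      map_add' := by
        intro a b
        apply LinearMap.ext
        intro x
        induction x using Submodule.Quotient.induction_on with
        | H x =>
          simp only [Submodule.liftQ_apply, LinearMap.add_apply, LinearMap.coe_mk,
            AddHom.coe_mk]
          exact hadd2 x a b
      map_smul' := by
        intro r y
        apply LinearMap.ext
        intro x
        induction x using Submodule.Quotient.induction_on with
        | H x =>
          simp only [Submodule.liftQ_apply, LinearMap.smul_apply, LinearMap.coe_mk,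
            AddHom.coe_mk, RingHom.id_apply]
          have : ((r • y : N) : H) = (r : ℂ) • (y : H) := by
            simp [Submodule.coe_smul]
          rw [this, hsmul2, Complex.conj_ofReal]
          simp [Complex.real_smul] } with hfdef
  have hfinj : Function.Injective f := by
    rw [← LinearMap.ker_eq_bot]
    apply (Submodule.eq_bot_iff _).mpr
    intro y hy
    have h0 : ∀ x : H, ω x (y : H) = 0 := by
      intro x
      have := congrArg (fun g => g (Submodule.Quotient.mk x)) (LinearMap.mem_ker.mp hy)
      exact this
    have : (y : H) = 0 := by
      apply hnondeg
      intro x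
      rw [hskew, h0 x, map_zero, neg_zero]
    exact Subtype.ext this
  -- dimension counting
  have hfinR : FiniteDimensional ℝ ((H ⧸ A) →ₗ[ℂ] ℂ) := by
    have : FiniteDimensional ℂ ((H ⧸ A) →ₗ[ℂ] ℂ) := inferInstance
    exact FiniteDimensional.trans ℝ ℂ _
  have hNfinR : FiniteDimensional ℝ N := FiniteDimensional.of_injective f hfinj
  have hNfinC : FiniteDimensional ℂ N := by
    have : Module.Finite ℝ N := hNfinR
    exact Module.Finite.of_restrictScalars_finite ℝ ℂ N
  have hdimR : Module.finrank ℝ N ≤ Module.finrank ℝ ((H ⧸ A) →ₗ[ℂ] ℂ) :=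
    LinearMap.finrank_le_finrank_of_injective hfinj
  have htowerN : Module.finrank ℝ ℂ * Module.finrank ℂ N = Module.finrank ℝ N :=
    Module.finrank_mul_finrank ℝ ℂ N
  have htowerD : Module.finrank ℝ ℂ * Module.finrank ℂ ((H ⧸ A) →ₗ[ℂ] ℂ)
      = Module.finrank ℝ ((H ⧸ A) →ₗ[ℂ] ℂ) :=
    Module.finrank_mul_finrank ℝ ℂ _
  have hdual : Module.finrank ℂ ((H ⧸ A) →ₗ[ℂ] ℂ) = Module.finrank ℂ (H ⧸ A) :=
    Subspace.dual_finrank_eq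
  have h2 : (2 : ℕ) = Module.finrank ℝ ℂ := Complex.finrank_real_complex.symm
  have hdimC : Module.finrank ℂ N ≤ Module.finrank ℂ (H ⧸ A) := by
    have : Module.finrank ℝ ℂ * Module.finrank ℂ N
        ≤ Module.finrank ℝ ℂ * Module.finrank ℂ (H ⧸ A) := by
      rw [htowerN, ← hdual, htowerD]
      exact hdimR
    have h2pos : 0 < Module.finrank ℝ ℂ := by rw [← h2]; norm_num
    exact Nat.le_of_mul_le_mul_left this h2pos
  -- finrank (lam ⊓ mu) ≤ finrank N via inclusion
  have hKleN : Module.finrank ℂ ↥(lam ⊓ mu) ≤ Module.finrank ℂ N :=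
    LinearMap.finrank_le_finrank_of_injective
      (Submodule.inclusion_injective hKN)
  have hindex' : Module.finrank ℂ (H ⧸ A) ≤ Module.finrank ℂ ↥(lam ⊓ mu) := by
    exact_mod_cast hindex
  have hKeq : Module.finrank ℂ ↥(lam ⊓ mu) = Module.finrank ℂ (H ⧸ A) :=
    le_antisymm (hKleN.trans hdimC) hindex'
  have hNK : Module.finrank ℂ N ≤ Module.finrank ℂ ↥(lam ⊓ mu) :=
    hdimC.trans hindex'
  have hKN' : lam ⊓ mu = N := Submodule.eq_of_le_of_finrank_le hKN hNK
  refine ⟨hKeq, ?_⟩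
  have : {y : H | ∀ x ∈ A, ω x y = 0} = (N : Set H) := rfl
  rw [this, ← hKN']
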